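/- Let 𝓑 be a basis of a Banach space X, 𝐧 a strictly increasing sequence of positive integers, and λ > 1 a real number. The following are equivalent: (i) 𝓑 is (λ, 𝐧, strong partially greedy); (ii) 𝓑 is quasi-greedy and (λ, 𝐧, PSLC); (iii) 𝓑 is quasi-greedy and (λ, 𝐧, superconservative); (iv) 𝓑 is quasi-greedy and (λ, 𝐧, conservative). -/

import Mathlib

open scoped BigOperators ENNReal NNReal

/-- The collection `𝕋(𝐧)`: pairs of finite sets `(A, D)` with `A ⊆ 𝐧`, `|A| ≤ |D|`
and `A < D ∩ 𝐧`. -/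
def TPair (seq : ℕ → ℕ) (A D : Finset ℕ) : Prop :=
  (↑A : Set ℕ) ⊆ Set.range seq ∧ A.card ≤ D.card ∧
    ∀ a ∈ A, ∀ d ∈ D, d ∈ Set.range seq → a < d

/-- The collection `𝕊(𝐧)`: pairs of finite sets `(A, D)` with `A ⊆ 𝐧` and `|A| ≤ |D|`. -/
def SPair (seq : ℕ → ℕ) (A D : Finset ℕ) : Prop :=
  (↑A : Set ℕ) ⊆ Set.range seq ∧ A.card ≤ D.card

/-- The interval `{n_{k+1}, …, n_{k+m}}` of `m` consecutive terms of the sequence `seq`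
(0-indexed: `seq k, …, seq (k+m-1)`). -/
def intervalSet (seq : ℕ → ℕ) (k m : ℕ) : Finset ℕ :=
  (Finset.range m).image fun i => seq (k + i)

/-- The (1-based) index `ι(max A)` of the largest element of `A` in the sequence `seq`
(`0` if `A` is empty). -/
noncomputable def iotaMax (seq : ℕ → ℕ) (A : Finset ℕ) : ℕ :=
  if h : A.Nonempty then sInf {i | seq i = A.max' h} + 1 else 0

/-- The collection `𝕋^ω(𝐧)`: pairs of finite sets `(A, D)` with `A ⊆ 𝐧`, `ω(A) ≤ ω(D)`
and `A < D ∩ 𝐧`. -/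
def WTPair (w : Set ℕ → ℝ≥0∞) (seq : ℕ → ℕ) (A D : Finset ℕ) : Prop :=
  (↑A : Set ℕ) ⊆ Set.range seq ∧ w (↑A : Set ℕ) ≤ w (↑D : Set ℕ) ∧
    ∀ a ∈ A, ∀ d ∈ D, d ∈ Set.range seq → a < d

/-- A (semi-normalized) basis `(e_n)` of a Banach space `X`, together with its biorthogonal
functionals `(e_n^*)`: the span of the `e_n` is norm-dense, `e_j^*(e_k) = δ_{jk}`, and the
norms of the `e_n` and `e_n^*` are bounded above and away from zero. -/
structure BasisOf (𝕜 : Type*) (X : Type*) [RCLike 𝕜] [NormedAddCommGroup X]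
    [NormedSpace 𝕜 X] where
  e : ℕ → X
  coord : ℕ → X →L[𝕜] 𝕜
  dense_span : Dense (↑(Submodule.span 𝕜 (Set.range e)) : Set X)
  biorth : ∀ j k : ℕ, coord j (e k) = if j = k then (1 : 𝕜) else 0
  norm_bounds : ∃ c₁ c₂ : ℝ, 0 < c₁ ∧ (∀ n, c₁ ≤ ‖e n‖ ∧ c₁ ≤ ‖coord n‖) ∧
    ∀ n, ‖e n‖ ≤ c₂ ∧ ‖coord n‖ ≤ c₂

namespace BasisOf

variable {𝕜 : Type*} {X : Type*} [RCLike 𝕜] [NormedAddCommGroup X] [NormedSpace 𝕜 X]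
variable (B : BasisOf 𝕜 X)

/-- The projection `P_A(x) = ∑_{n ∈ A} e_n^*(x) e_n`. -/
noncomputable def proj (A : Finset ℕ) (x : X) : X := ∑ n ∈ A, B.coord n x • B.e n

/-- `1_{εA} = ∑_{n ∈ A} ε_n e_n`. -/
noncomputable def sgnSum (ε : ℕ → 𝕜) (A : Finset ℕ) : X := ∑ n ∈ A, ε n • B.e n

/-- `1_A = ∑_{n ∈ A} e_n`. -/
noncomputable def ones (A : Finset ℕ) : X := ∑ n ∈ A, B.e n

/-- `P^𝐧_m(x) = ∑_{i=1}^m e_{n_i}^*(x) e_{n_i}`, the projection on the first `m` terms of the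
subsequence given by `seq`. -/
noncomputable def projSeq (seq : ℕ → ℕ) (m : ℕ) (x : X) : X :=
  ∑ i ∈ Finset.range m, B.coord (seq i) x • B.e (seq i)

/-- `A` is a greedy set of `x`: the coefficients inside `A` dominate those outside. -/
def IsGreedySet (x : X) (A : Finset ℕ) : Prop :=
  ∀ a ∈ A, ∀ b ∉ A, ‖B.coord b x‖ ≤ ‖B.coord a x‖

/-- The support `{n : e_n^*(x) ≠ 0}`. -/
def supp (x : X) : Set ℕ := {n | B.coord n x ≠ 0}

/-- `𝓑` is `C`-(`𝐧`, strong partially greedy):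
`‖x - G_m(x)‖ ≤ C ⋅ σ̂^𝐧_m(x)` for all `x`, all `m ≥ 1` and all greedy sums. -/
def SPGWith (seq : ℕ → ℕ) (C : ℝ) : Prop :=
  ∀ x : X, ∀ m : ℕ, 1 ≤ m → ∀ A : Finset ℕ, A.card = m → B.IsGreedySet x A →
    ∀ k : ℕ, k ≤ m → ‖x - B.proj A x‖ ≤ C * ‖x - B.projSeq seq k x‖

/-- `𝓑` is (`𝐧`, strong partially greedy). -/
def SPG (seq : ℕ → ℕ) : Prop := ∃ C : ℝ, 1 ≤ C ∧ B.SPGWith seq C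

/-- `𝓑` is quasi-greedy with constant `C`. -/
def QuasiGreedyWith (C : ℝ) : Prop :=
  ∀ x : X, ∀ A : Finset ℕ, A.Nonempty → B.IsGreedySet x A → ‖B.proj A x‖ ≤ C * ‖x‖

/-- `𝓑` is quasi-greedy. -/
def QuasiGreedy : Prop := ∃ C : ℝ, B.QuasiGreedyWith C

/-- `𝓑` is suppression quasi-greedy with constant `C`. -/
def SuppQGWith (C : ℝ) : Prop :=
  ∀ x : X, ∀ A : Finset ℕ, A.Nonempty → B.IsGreedySet x A → ‖x - B.proj A x‖ ≤ C * ‖x‖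

/-- `𝓑` is `C`-(`𝐧`, PSLC). -/
def PSLCWith (seq : ℕ → ℕ) (C : ℝ) : Prop :=
  ∀ x : X, (∀ n, ‖B.coord n x‖ ≤ 1) → ∀ A D : Finset ℕ, TPair seq A D →
    (∀ d ∈ D, B.coord d x = 0) →
    (∀ a ∈ A, ∀ j : ℕ, (j ∈ D ∨ B.coord j x ≠ 0) → j ∈ Set.range seq → a < j) →
    ∀ ε δ : ℕ → 𝕜, (∀ n, ‖ε n‖ = 1) → (∀ n, ‖δ n‖ = 1) →
      ‖x + B.sgnSum ε A‖ ≤ C * ‖x + B.sgnSum δ D‖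

/-- `𝓑` is (`𝐧`, PSLC). -/
def PSLC (seq : ℕ → ℕ) : Prop := ∃ C : ℝ, 1 ≤ C ∧ B.PSLCWith seq C

/-- `𝓑` is (`𝐧`, superconservative) with constant `C`. -/
def SuperconservativeWith (seq : ℕ → ℕ) (C : ℝ) : Prop :=
  ∀ A D : Finset ℕ, TPair seq A D →
    ∀ ε δ : ℕ → 𝕜, (∀ n, ‖ε n‖ = 1) → (∀ n, ‖δ n‖ = 1) →
      ‖B.sgnSum ε A‖ ≤ C * ‖B.sgnSum δ D‖

/-- `𝓑` is (`𝐧`, superconservative). -/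
def Superconservative (seq : ℕ → ℕ) : Prop :=
  ∃ C : ℝ, 0 < C ∧ B.SuperconservativeWith seq C

/-- `𝓑` is (`𝐧`, conservative) with constant `C`. -/
def ConservativeWith (seq : ℕ → ℕ) (C : ℝ) : Prop :=
  ∀ A D : Finset ℕ, TPair seq A D → ‖B.ones A‖ ≤ C * ‖B.ones D‖

/-- `𝓑` is (`𝐧`, conservative). -/
def Conservative (seq : ℕ → ℕ) : Prop := ∃ C : ℝ, 0 < C ∧ B.ConservativeWith seq C

/-- `𝓑` is (`𝐧`, democratic) with constant `C`. -/
def DemocraticWith (seq : ℕ → ℕ) (C : ℝ) : Prop :=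
  ∀ A D : Finset ℕ, SPair seq A D → ‖B.ones A‖ ≤ C * ‖B.ones D‖

/-- `𝓑` is (`𝐧`, democratic). -/
def Democratic (seq : ℕ → ℕ) : Prop := ∃ C : ℝ, B.DemocraticWith seq C

/-- `𝓑` is (`𝐧`, almost greedy) with constant `C`:
`‖x - G_m(x)‖ ≤ C σ̃^𝐧_m(x)` where `σ̃^𝐧_m(x) = inf {‖x - P_D(x)‖ : D ⊆ 𝐧, |D| = m}`. -/
def AlmostGreedyWith (seq : ℕ → ℕ) (C : ℝ) : Prop :=
  ∀ x : X, ∀ m : ℕ, 1 ≤ m → ∀ A : Finset ℕ, A.card = m → B.IsGreedySet x A →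
    ∀ D : Finset ℕ, (↑D : Set ℕ) ⊆ Set.range seq → D.card = m →
      ‖x - B.proj A x‖ ≤ C * ‖x - B.proj D x‖

/-- `𝓑` is (`𝐧`, almost greedy). -/
def AlmostGreedy (seq : ℕ → ℕ) : Prop := ∃ C : ℝ, 1 ≤ C ∧ B.AlmostGreedyWith seq C

/-- `𝓑` is 1-unconditional. -/
def OneUnconditional : Prop :=
  ∀ (F : Finset ℕ) (a b : ℕ → 𝕜), (∀ n, ‖a n‖ ≤ ‖b n‖) →
    ‖∑ n ∈ F, a n • B.e n‖ ≤ ‖∑ n ∈ F, b n • B.e n‖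

/-- `𝓑` is `C`-(`𝐧`, consecutive almost greedy) of type I. -/
def CAGIWith (seq : ℕ → ℕ) (C : ℝ) : Prop :=
  ∀ x : X, ∀ m : ℕ, 1 ≤ m → ∀ A : Finset ℕ, A.card = m → B.IsGreedySet x A →
    ∀ k : ℕ, ‖x - B.proj A x‖ ≤ C * ‖x - B.proj (intervalSet seq k m) x‖

/-- `𝓑` is `C`-(`𝐧`, consecutive almost greedy) of type II. -/
def CAGIIWith (seq : ℕ → ℕ) (C : ℝ) : Prop :=
  ∀ x : X, ∀ m : ℕ, 1 ≤ m → ∀ A : Finset ℕ, A.card = m → B.IsGreedySet x A →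
    ∀ k p : ℕ, ((↑(intervalSet seq k p) : Set ℕ) ∩ B.supp x).ncard ≤ m →
      ‖x - B.proj A x‖ ≤ C * ‖x - B.proj (intervalSet seq k p) x‖

/-- `𝓑` is `C`-(`𝐧`, RSLC). -/
def RSLCWith (seq : ℕ → ℕ) (C : ℝ) : Prop :=
  ∀ x : X, (∀ n, ‖B.coord n x‖ ≤ 1) → ∀ A D : Finset ℕ, SPair seq A D →
    (∀ d ∈ D, B.coord d x = 0) →
    (∀ j : ℕ, (j ∈ D ∨ B.coord j x ≠ 0) → j ∈ Set.range seq →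
      (∀ a ∈ A, j < a) ∨ (∀ a ∈ A, a < j)) →
    ∀ ε δ : ℕ → 𝕜, (∀ n, ‖ε n‖ = 1) → (∀ n, ‖δ n‖ = 1) →
      ‖x + B.sgnSum ε A‖ ≤ C * ‖x + B.sgnSum δ D‖

/-- `𝓑` is `C`-(`𝐧`, SLC). -/
def SLCWith (seq : ℕ → ℕ) (C : ℝ) : Prop :=
  ∀ x : X, (∀ n, ‖B.coord n x‖ ≤ 1) → ∀ A D : Finset ℕ, SPair seq A D →
    Disjoint A D → (∀ a ∈ A, B.coord a x = 0) → (∀ d ∈ D, B.coord d x = 0) →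
    ∀ ε δ : ℕ → 𝕜, (∀ n, ‖ε n‖ = 1) → (∀ n, ‖δ n‖ = 1) →
      ‖x + B.sgnSum ε A‖ ≤ C * ‖x + B.sgnSum δ D‖

/-- The Lebesgue-type parameter `L̂^𝐧_m`: the least constant `C ∈ [0,∞]` with
`‖x - G_m(x)‖ ≤ C σ̂^𝐧_m(x)` for all `x` and all greedy sums `G_m(x)`. -/
noncomputable def Lhat (seq : ℕ → ℕ) (m : ℕ) : ℝ≥0∞ :=
  sInf {C : ℝ≥0∞ | ∀ (x : X) (A : Finset ℕ), A.card = m → B.IsGreedySet x A →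
    ∀ k : ℕ, k ≤ m →
      (‖x - B.proj A x‖₊ : ℝ≥0∞) ≤ C * (‖x - B.projSeq seq k x‖₊ : ℝ≥0∞)}

/-- The parameter `g_m^c`. -/
noncomputable def gc (m : ℕ) : ℝ≥0∞ :=
  ⨆ (x : X) (_ : x ≠ 0) (A : Finset ℕ) (_ : A.card ≤ m) (_ : B.IsGreedySet x A),
    (‖x - B.proj A x‖₊ : ℝ≥0∞) / (‖x‖₊ : ℝ≥0∞)

/-- The parameter `g̃_m`. -/
noncomputable def gtilde (m : ℕ) : ℝ≥0∞ :=
  ⨆ (x : X) (_ : x ≠ 0) (A : Finset ℕ) (A' : Finset ℕ) (_ : A ⊆ A') (_ : A.card < A'.card)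
    (_ : A'.card ≤ m) (_ : B.IsGreedySet x A) (_ : B.IsGreedySet x A'),
    (‖B.proj A' x - B.proj A x‖₊ : ℝ≥0∞) / (‖x‖₊ : ℝ≥0∞)

/-- The parameter `sc^𝐧_m`. -/
noncomputable def scParam (seq : ℕ → ℕ) (m : ℕ) : ℝ≥0∞ :=
  ⨆ (A : Finset ℕ) (D : Finset ℕ) (_ : TPair seq A D) (_ : D.card ≤ m)
    (_ : ∀ a ∈ A, a ≤ seq (m - 1)) (ε : ℕ → 𝕜) (_ : ∀ n, ‖ε n‖ = 1)
    (δ : ℕ → 𝕜) (_ : ∀ n, ‖δ n‖ = 1),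
    (‖B.sgnSum ε A‖₊ : ℝ≥0∞) / (‖B.sgnSum δ D‖₊ : ℝ≥0∞)

/-- The parameter `ω^𝐧_m`. -/
noncomputable def omegaParam (seq : ℕ → ℕ) (m : ℕ) : ℝ≥0∞ :=
  ⨆ (x : X) (_ : ∀ n, ‖B.coord n x‖ ≤ 1) (A : Finset ℕ) (D : Finset ℕ)
    (_ : (↑A : Set ℕ) ⊆ Set.range seq) (_ : A.card ≤ D.card) (_ : D.card ≤ m)
    (_ : ∀ a ∈ A, a ≤ seq (m - 1)) (_ : ∀ d ∈ D, B.coord d x = 0)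
    (_ : ∀ a ∈ A, ∀ j : ℕ, (j ∈ D ∨ B.coord j x ≠ 0) → j ∈ Set.range seq → a < j)
    (ε : ℕ → 𝕜) (_ : ∀ n, ‖ε n‖ = 1) (δ : ℕ → 𝕜) (_ : ∀ n, ‖δ n‖ = 1),
    (‖x + B.sgnSum ε A‖₊ : ℝ≥0∞) / (‖x + B.sgnSum δ D‖₊ : ℝ≥0∞)

/-- The parameter `ω̂^𝐧_m`. -/
noncomputable def omegaHatParam (seq : ℕ → ℕ) (m : ℕ) : ℝ≥0∞ :=
  ⨆ (x : X) (_ : ∀ n, ‖B.coord n x‖ ≤ 1) (A : Finset ℕ) (D : Finset ℕ)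
    (_ : (↑A : Set ℕ) ⊆ Set.range seq) (_ : A.card ≤ D.card) (_ : D.card ≤ m)
    (_ : ∀ a ∈ A, a ≤ seq (m - 1))
    (_ : ∀ d ∈ D, B.coord d (x - B.proj A x) = 0)
    (_ : ∀ a ∈ A, ∀ j : ℕ, (j ∈ D ∨ B.coord j (x - B.proj A x) ≠ 0) →
      j ∈ Set.range seq → a < j)
    (ε : ℕ → 𝕜) (_ : ∀ n, ‖ε n‖ = 1),
    (‖x‖₊ : ℝ≥0∞) / (‖x - B.proj A x + B.sgnSum ε D‖₊ : ℝ≥0∞)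

/-- `κ = sup_{j,k} ‖e_j‖ ‖e_k^*‖`. -/
noncomputable def kappa : ℝ≥0∞ :=
  ⨆ (j : ℕ) (k : ℕ), ((‖B.e j‖₊ * ‖B.coord k‖₊ : ℝ≥0) : ℝ≥0∞)

/-- `𝓑` is `𝐬`-(`𝐧`, strong partially greedy) with constant `C`:
the strong partially greedy inequality for all orders `m` in the sequence `s`. -/
def SPGOnWith (seq : ℕ → ℕ) (s : ℕ → ℕ) (C : ℝ) : Prop :=
  ∀ x : X, ∀ i : ℕ, ∀ A : Finset ℕ, A.card = s i → B.IsGreedySet x A →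
    ∀ k : ℕ, k ≤ s i → ‖x - B.proj A x‖ ≤ C * ‖x - B.projSeq seq k x‖

/-- `𝓑` is (`λ`, `𝐧`, strong partially greedy). -/
def LamSPG (seq : ℕ → ℕ) (lam : ℝ) : Prop :=
  ∃ C : ℝ, 1 ≤ C ∧ ∀ x : X, ∀ m : ℕ, 1 ≤ m →
    ∀ A : Finset ℕ, A.card = ⌈lam * (m : ℝ)⌉₊ → B.IsGreedySet x A →
      ∀ k : ℕ, k ≤ m → ‖x - B.proj A x‖ ≤ C * ‖x - B.projSeq seq k x‖

/-- `𝓑` is (`λ`, `𝐧`, PSLC). -/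
def LamPSLC (seq : ℕ → ℕ) (lam : ℝ) : Prop :=
  ∃ C : ℝ, 1 ≤ C ∧ ∀ x : X, (∀ n, ‖B.coord n x‖ ≤ 1) →
    ∀ A D : Finset ℕ, (↑A : Set ℕ) ⊆ Set.range seq → A.card ≤ D.card →
      (lam - 1) * (iotaMax seq A : ℝ) + A.card ≤ D.card →
      (∀ d ∈ D, B.coord d x = 0) →
      (∀ a ∈ A, ∀ j : ℕ, (j ∈ D ∨ B.coord j x ≠ 0) → j ∈ Set.range seq → a < j) →
      ∀ ε δ : ℕ → 𝕜, (∀ n, ‖ε n‖ = 1) → (∀ n, ‖δ n‖ = 1) →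
        ‖x + B.sgnSum ε A‖ ≤ C * ‖x + B.sgnSum δ D‖

/-- `𝓑` is (`λ`, `𝐧`, superconservative). -/
def LamSuperconservative (seq : ℕ → ℕ) (lam : ℝ) : Prop :=
  ∃ C : ℝ, 0 < C ∧ ∀ A D : Finset ℕ, TPair seq A D →
    (lam - 1) * (iotaMax seq A : ℝ) + A.card ≤ D.card →
    ∀ ε δ : ℕ → 𝕜, (∀ n, ‖ε n‖ = 1) → (∀ n, ‖δ n‖ = 1) →
      ‖B.sgnSum ε A‖ ≤ C * ‖B.sgnSum δ D‖

/-- `𝓑` is (`λ`, `𝐧`, conservative). -/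
def LamConservative (seq : ℕ → ℕ) (lam : ℝ) : Prop :=
  ∃ C : ℝ, 0 < C ∧ ∀ A D : Finset ℕ, TPair seq A D →
    (lam - 1) * (iotaMax seq A : ℝ) + A.card ≤ D.card →
    ‖B.ones A‖ ≤ C * ‖B.ones D‖

/-- `𝓑` is `ω`-(`𝐧`, strong partially greedy) for the weight on sets `w`. -/
def WSPG (seq : ℕ → ℕ) (w : Set ℕ → ℝ≥0∞) : Prop :=
  ∃ C : ℝ, 1 ≤ C ∧ ∀ x : X, ∀ m : ℕ, 1 ≤ m → ∀ A : Finset ℕ, A.card = m →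
    B.IsGreedySet x A → ∀ m' : ℕ,
      w (↑((Finset.range m').image seq \ A) : Set ℕ) ≤
        w (↑(A \ (Finset.range m').image seq) : Set ℕ) →
      ‖x - B.proj A x‖ ≤ C * ‖x - B.proj ((Finset.range m').image seq) x‖

/-- `𝓑` is `ω`-(`𝐧`, PSLC). -/
def WPSLC (seq : ℕ → ℕ) (w : Set ℕ → ℝ≥0∞) : Prop :=
  ∃ C : ℝ, 1 ≤ C ∧ ∀ x : X, (∀ n, ‖B.coord n x‖ ≤ 1) →
    ∀ A D : Finset ℕ, WTPair w seq A D →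
      (∀ d ∈ D, B.coord d x = 0) →
      (∀ a ∈ A, ∀ j : ℕ, (j ∈ D ∨ B.coord j x ≠ 0) → j ∈ Set.range seq → a < j) →
      ∀ ε δ : ℕ → 𝕜, (∀ n, ‖ε n‖ = 1) → (∀ n, ‖δ n‖ = 1) →
        ‖x + B.sgnSum ε A‖ ≤ C * ‖x + B.sgnSum δ D‖

/-- `𝓑` is `ω`-(`𝐧`, superconservative). -/
def WSuperconservative (seq : ℕ → ℕ) (w : Set ℕ → ℝ≥0∞) : Prop :=
  ∃ C : ℝ, 0 < C ∧ ∀ A D : Finset ℕ, WTPair w seq A D →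
    ∀ ε δ : ℕ → 𝕜, (∀ n, ‖ε n‖ = 1) → (∀ n, ‖δ n‖ = 1) →
      ‖B.sgnSum ε A‖ ≤ C * ‖B.sgnSum δ D‖

/-- `𝓑` is `ω`-(`𝐧`, conservative). -/
def WConservative (seq : ℕ → ℕ) (w : Set ℕ → ℝ≥0∞) : Prop :=
  ∃ C : ℝ, 0 < C ∧ ∀ A D : Finset ℕ, WTPair w seq A D → ‖B.ones A‖ ≤ C * ‖B.ones D‖

end BasisOf

/-- A Banach space over `𝕜` equipped with a basis. -/
structure BanachWithBasis (𝕜 : Type*) [RCLike 𝕜] where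
  carrier : Type
  [grp : NormedAddCommGroup carrier]
  [mod : NormedSpace 𝕜 carrier]
  [comp : CompleteSpace carrier]
  basis : BasisOf 𝕜 carrier

attribute [instance] BanachWithBasis.grp BanachWithBasis.mod BanachWithBasis.comp


namespace BasisOf

variable {𝕜 : Type*} {X : Type*} [RCLike 𝕜] [NormedAddCommGroup X] [NormedSpace 𝕜 X]

section Aux


variable {B : BasisOf 𝕜 X}

lemma coord_sum (F : Finset ℕ) (c : ℕ → 𝕜) (j : ℕ) :
    B.coord j (∑ n ∈ F, c n • B.e n) = if j ∈ F then c j else 0 := by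
  rw [map_sum]
  have : ∀ n ∈ F, B.coord j (c n • B.e n) = if n = j then c n else 0 := by
    intro n _
    rw [map_smul, B.biorth]
    by_cases h : j = n <;> simp [h, eq_comm]
  rw [Finset.sum_congr rfl this, Finset.sum_ite_eq' F j c]

lemma coord_proj (A : Finset ℕ) (x : X) (j : ℕ) :
    B.coord j (B.proj A x) = if j ∈ A then B.coord j x else 0 := coord_sum A _ j

lemma coord_sgnSum (ε : ℕ → 𝕜) (A : Finset ℕ) (j : ℕ) :
    B.coord j (B.sgnSum ε A) = if j ∈ A then ε j else 0 := coord_sum A _ j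

lemma coord_sub_proj (A : Finset ℕ) (x : X) (j : ℕ) :
    B.coord j (x - B.proj A x) = if j ∈ A then 0 else B.coord j x := by
  rw [map_sub, coord_proj]
  by_cases h : j ∈ A <;> simp [h]

lemma proj_of_coords (A : Finset ℕ) (x : X) :
    B.proj A x = ∑ n ∈ A, B.coord n x • B.e n := rfl

lemma sgnSum_ones (A : Finset ℕ) : B.sgnSum (fun _ => (1:𝕜)) A = B.ones A := by
  unfold sgnSum ones; simp

lemma proj_empty (x : X) : B.proj (∅ : Finset ℕ) x = 0 := rfl

lemma sgnSum_empty (ε : ℕ → 𝕜) : B.sgnSum ε (∅ : Finset ℕ) = 0 := rfl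

lemma projSeq_eq_proj (seq : ℕ → ℕ) (hseq : StrictMono seq) (m : ℕ) (x : X) :
    B.projSeq seq m x = B.proj ((Finset.range m).image seq) x := by
  unfold projSeq proj
  rw [Finset.sum_image (fun a _ b _ h => hseq.injective h)]

lemma proj_union_sdiff (A D : Finset ℕ) (x : X) :
    B.proj (A ∪ D) x = B.proj A x + B.proj (D \ A) x := by
  unfold proj
  rw [← Finset.sum_union (Finset.disjoint_sdiff), Finset.union_sdiff_self_eq_union]

lemma norm_coord_le (x : X) {c₂ : ℝ} (hc : ∀ n, ‖B.e n‖ ≤ c₂ ∧ ‖B.coord n‖ ≤ c₂) (n : ℕ) :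
    ‖B.coord n x‖ ≤ c₂ * ‖x‖ := by
  have h1 : ‖B.coord n x‖ ≤ ‖B.coord n‖ * ‖x‖ := (B.coord n).le_opNorm x
  have h2 : ‖B.coord n‖ * ‖x‖ ≤ c₂ * ‖x‖ :=
    mul_le_mul_of_nonneg_right (hc n).2 (norm_nonneg x)
  linarith

/-- Only finitely many coordinates of `x` exceed a positive threshold. -/
lemma finite_large_coords (B : BasisOf 𝕜 X) (x : X) {t : ℝ} (ht : 0 < t) :
    ∃ F : Finset ℕ, ∀ j, t ≤ ‖B.coord j x‖ → j ∈ F := by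
  obtain ⟨c₁, c₂, hc₁, hlow, hhigh⟩ := B.norm_bounds
  have hc₂ : 0 < c₂ := lt_of_lt_of_le hc₁ (le_trans (hlow 0).1 (hhigh 0).1)
  have hd := B.dense_span
  have hx : x ∈ closure (↑(Submodule.span 𝕜 (Set.range B.e)) : Set X) := by
    rw [hd.closure_eq]; trivial
  have hε : 0 < t / (c₂ + 1) := by positivity
  obtain ⟨y, hy, hdist⟩ := Metric.mem_closure_iff.1 hx _ hε
  obtain ⟨n, f, g, hfg⟩ := Submodule.mem_span_set'.1 hy
  choose k hk using fun i => (g i).2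
  refine ⟨Finset.image k Finset.univ, fun j hj => ?_⟩
  by_contra hjF
  have hcy : B.coord j y = 0 := by
    rw [← hfg, map_sum]
    refine Finset.sum_eq_zero fun i _ => ?_
    rw [map_smul, ← hk i, B.biorth]
    have : j ≠ k i := fun h => hjF (by subst h; exact Finset.mem_image_of_mem k (Finset.mem_univ i))
    simp [this]
  have : ‖B.coord j x‖ = ‖B.coord j (x - y)‖ := by rw [map_sub, hcy, sub_zero]
  have hle : ‖B.coord j x‖ ≤ c₂ * ‖x - y‖ := by
    rw [this]; exact norm_coord_le _ hhigh j
  have hxy : ‖x - y‖ < t / (c₂ + 1) := by rw [← dist_eq_norm]; exact hdist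
  have : ‖B.coord j x‖ < t := by
    calc ‖B.coord j x‖ ≤ c₂ * ‖x - y‖ := hle
    _ < c₂ * (t / (c₂ + 1)) := by gcongr
    _ < t := by rw [mul_div_assoc']; rw [div_lt_iff₀ (by positivity)]; nlinarith
  linarith

/-- One-step greedy extension. -/
lemma greedy_extend_one (B : BasisOf 𝕜 X) (x : X) (S : Finset ℕ) (hS : B.IsGreedySet x S) :
    ∃ j ∉ S, B.IsGreedySet x (insert j S) := by
  by_cases hT : ∃ n, n ∉ S ∧ B.coord n x ≠ 0
  · obtain ⟨n₀, hn₀S, hn₀⟩ := hT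
    have ht : 0 < ‖B.coord n₀ x‖ := norm_pos_iff.2 hn₀
    obtain ⟨F, hF⟩ := B.finite_large_coords x ht
    have hF' : (F \ S).Nonempty := ⟨n₀, Finset.mem_sdiff.2 ⟨hF n₀ le_rfl, hn₀S⟩⟩
    obtain ⟨j, hjF, hjmax⟩ := (F \ S).exists_max_image (fun n => ‖B.coord n x‖) hF'
    obtain ⟨hjF', hjS⟩ := Finset.mem_sdiff.1 hjF
    refine ⟨j, hjS, fun a ha b hb => ?_⟩
    have hbS : b ∉ S := fun h => hb (Finset.mem_insert_of_mem h)
    have hbj : b ≠ j := fun h => hb (h ▸ Finset.mem_insert_self j S)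
    rcases Finset.mem_insert.1 ha with rfl | haS
    · -- a = j
      by_cases hbig : ‖B.coord n₀ x‖ ≤ ‖B.coord b x‖
      · exact hjmax b (Finset.mem_sdiff.2 ⟨hF b hbig, hbS⟩)
      · have h1 : ‖B.coord n₀ x‖ ≤ ‖B.coord a x‖ :=
          hjmax n₀ (Finset.mem_sdiff.2 ⟨hF n₀ le_rfl, hn₀S⟩)
        linarith [lt_of_not_ge hbig]
    · exact hS a haS b hbS
  · push_neg at hT
    refine ⟨(S.sup id) + 1, fun h => by
      have := Finset.le_sup (f := id) h; simp only [id_eq] at this; omega, fun a ha b hb => ?_⟩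
    have hbS : b ∉ S := fun h => hb (Finset.mem_insert_of_mem h)
    rcases Finset.mem_insert.1 ha with rfl | haS
    · rw [hT b hbS]; simp
    · exact hS a haS b hbS

lemma greedy_extend (B : BasisOf 𝕜 X) (x : X) (S : Finset ℕ) (hS : B.IsGreedySet x S) (r : ℕ) :
    ∃ S', S ⊆ S' ∧ S'.card = S.card + r ∧ B.IsGreedySet x S' := by
  induction r with
  | zero => exact ⟨S, le_refl S, rfl, hS⟩
  | succ n ih =>
    obtain ⟨S', hsub, hcard, hgr⟩ := ih
    obtain ⟨j, hj, hgr'⟩ := greedy_extend_one B x S' hgr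
    exact ⟨insert j S', hsub.trans (Finset.subset_insert j S'),
      by rw [Finset.card_insert_of_notMem hj, hcard]; omega, hgr'⟩

/-- Abel summation engine. -/
lemma engine (B : BasisOf 𝕜 X) {C : ℝ} (hC : 0 ≤ C) (hQ : B.QuasiGreedyWith C) (z : X)
    (w : ℕ → ℝ) (γ : ℝ) (hγ0 : 0 ≤ γ) :
    ∀ (n : ℕ) (G : Finset ℕ), G.card = n → B.IsGreedySet z G →
    (∀ G' ⊆ G, G'.Nonempty → ∃ g ∈ G', (∀ a ∈ G', ‖B.coord g z‖ ≤ ‖B.coord a z‖) ∧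
      ∀ a ∈ G', w a ≤ w g) →
    ∀ β : ℝ, γ ≤ β → (∀ g ∈ G, γ ≤ w g ∧ w g ≤ β) →
    ‖(∑ g ∈ G, ((w g : 𝕜) * B.coord g z) • B.e g) - (β : 𝕜) • B.proj G z‖
      ≤ (β - γ) * (C * ‖z‖) := by
  intro n
  induction n with
  | zero =>
    intro G hcard _ _ β hγβ _
    rw [Finset.card_eq_zero.1 hcard]
    simp only [Finset.sum_empty, proj_empty, smul_zero, sub_zero, norm_zero]
    have : 0 ≤ C * ‖z‖ := by positivity
    nlinarith
  | succ n ih =>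
    intro G hcard hgr hsel β hγβ hw
    have hne : G.Nonempty := Finset.card_pos.1 (by omega)
    obtain ⟨g, hgG, hgmin, hgmax⟩ := hsel G (le_refl G) hne
    set G' := G.erase g with hG'
    have hcard' : G'.card = n := by rw [hG', Finset.card_erase_of_mem hgG]; omega
    have hgr' : B.IsGreedySet z G' := by
      intro a ha b hb
      by_cases hbg : b = g
      · subst hbg; exact hgmin a (Finset.mem_of_mem_erase ha)
      · exact hgr a (Finset.mem_of_mem_erase ha) b (fun h => hb (Finset.mem_erase.2 ⟨hbg, h⟩))
    have hsel' : ∀ G'' ⊆ G', G''.Nonempty → ∃ g' ∈ G'', (∀ a ∈ G'', ‖B.coord g' z‖ ≤ ‖B.coord a z‖) ∧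
        ∀ a ∈ G'', w a ≤ w g' := fun G'' hsub hne' =>
      hsel G'' (hsub.trans (Finset.erase_subset g G)) hne'
    have hw' : ∀ g' ∈ G', γ ≤ w g' ∧ w g' ≤ w g := fun g' hg' =>
      ⟨(hw g' (Finset.mem_of_mem_erase hg')).1, hgmax g' (Finset.mem_of_mem_erase hg')⟩
    have hγwg : γ ≤ w g := (hw g hgG).1
    have hwgβ : w g ≤ β := (hw g hgG).2
    have IH := ih G' hcard' hgr' hsel' (w g) hγwg hw'
    -- algebra
    have hsum : (∑ a ∈ G, ((w a : 𝕜) * B.coord a z) • B.e a)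
        = (∑ a ∈ G', ((w a : 𝕜) * B.coord a z) • B.e a) + ((w g : 𝕜) * B.coord g z) • B.e g := by
      rw [hG', Finset.sum_erase_add G _ hgG]
    have hproj : B.proj G z = B.proj G' z + B.coord g z • B.e g := by
      unfold proj; rw [hG', Finset.sum_erase_add G _ hgG]
    have hPG : ‖B.proj G z‖ ≤ C * ‖z‖ := hQ z G hne hgr
    have key : (∑ a ∈ G, ((w a : 𝕜) * B.coord a z) • B.e a) - (β : 𝕜) • B.proj G z
        = ((∑ a ∈ G', ((w a : 𝕜) * B.coord a z) • B.e a) - ((w g : 𝕜)) • B.proj G' z)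
          + (((w g : 𝕜) - (β : 𝕜)) • B.proj G z) := by
      rw [hsum, hproj]
      rw [mul_smul]
      module
    rw [key]
    have hn2 : ‖((w g : 𝕜) - (β : 𝕜)) • B.proj G z‖ ≤ (β - w g) * (C * ‖z‖) := by
      rw [norm_smul]
      have : ‖(w g : 𝕜) - (β : 𝕜)‖ = β - w g := by
        rw [← RCLike.ofReal_sub, RCLike.norm_ofReal, abs_of_nonpos (by linarith)]
        ring
      rw [this]
      exact mul_le_mul_of_nonneg_left hPG (by linarith)
    calc ‖_ + _‖ ≤ _ := norm_add_le _ _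
      _ ≤ (w g - γ) * (C * ‖z‖) + (β - w g) * (C * ‖z‖) := add_le_add IH hn2
      _ = (β - γ) * (C * ‖z‖) := by ring

noncomputable def sgnOf (B : BasisOf 𝕜 X) (z : X) : ℕ → 𝕜 :=
  fun n => if B.coord n z = 0 then 1 else (‖B.coord n z‖ : 𝕜)⁻¹ * B.coord n z

lemma norm_sgnOf (B : BasisOf 𝕜 X) (z : X) (n : ℕ) : ‖B.sgnOf z n‖ = 1 := by
  unfold sgnOf
  by_cases h : B.coord n z = 0
  · simp [h]
  · rw [if_neg h, norm_mul, norm_inv, RCLike.norm_ofReal, abs_of_nonneg (norm_nonneg _),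
      inv_mul_cancel₀ (norm_ne_zero_iff.2 h)]

/-- Abel lemma: `t‖1_{σG}‖ ≤ 2C‖z‖`. -/
lemma abel_sgn (B : BasisOf 𝕜 X) {C : ℝ} (hC : 0 ≤ C) (hQ : B.QuasiGreedyWith C) (z : X)
    (G : Finset ℕ) (hgr : B.IsGreedySet z G) (hne : G.Nonempty)
    {t : ℝ} (ht : 0 < t) (hge : ∀ g ∈ G, t ≤ ‖B.coord g z‖) :
    t * ‖B.sgnSum (B.sgnOf z) G‖ ≤ 2 * C * ‖z‖ := by
  set w : ℕ → ℝ := fun n => ‖B.coord n z‖⁻¹ with hw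
  have hpos : ∀ g ∈ G, 0 < ‖B.coord g z‖ := fun g hg => lt_of_lt_of_le ht (hge g hg)
  have hsel : ∀ G' ⊆ G, G'.Nonempty → ∃ g ∈ G', (∀ a ∈ G', ‖B.coord g z‖ ≤ ‖B.coord a z‖) ∧
      ∀ a ∈ G', w a ≤ w g := by
    intro G' hsub hne'
    obtain ⟨g, hgG, hmin⟩ := G'.exists_min_image (fun n => ‖B.coord n z‖) hne'
    exact ⟨g, hgG, hmin, fun a ha =>
      inv_anti₀ (hpos g (hsub hgG)) (hmin a ha)⟩
  have hwb : ∀ g ∈ G, (0:ℝ) ≤ w g ∧ w g ≤ t⁻¹ := by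
    intro g hg
    constructor
    · positivity
    · rw [hw]; exact inv_anti₀ ht (hge g hg)
  have hE := B.engine hC hQ z w 0 le_rfl G.card G rfl hgr hsel t⁻¹
    (by positivity) hwb
  have hsum : (∑ g ∈ G, ((w g : 𝕜) * B.coord g z) • B.e g) = B.sgnSum (B.sgnOf z) G := by
    unfold sgnSum
    refine Finset.sum_congr rfl fun g hg => ?_
    have h0 : B.coord g z ≠ 0 := norm_pos_iff.1 (hpos g hg)
    unfold sgnOf
    rw [if_neg h0, hw]
    norm_cast
  rw [hsum] at hE
  have hPG : ‖B.proj G z‖ ≤ C * ‖z‖ := hQ z G hne hgr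
  have h1 : ‖B.sgnSum (B.sgnOf z) G‖ ≤ ‖B.sgnSum (B.sgnOf z) G - (t⁻¹ : 𝕜) • B.proj G z‖
      + ‖(t⁻¹ : 𝕜) • B.proj G z‖ := by
    have := norm_add_le (B.sgnSum (B.sgnOf z) G - (t⁻¹ : 𝕜) • B.proj G z)
      ((t⁻¹ : 𝕜) • B.proj G z)
    simpa using this
  have h2 : ‖((t⁻¹:ℝ) : 𝕜) • B.proj G z‖ ≤ t⁻¹ * (C * ‖z‖) := by
    rw [norm_smul, RCLike.norm_ofReal, abs_of_nonneg (by positivity)]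
    exact mul_le_mul_of_nonneg_left hPG (by positivity)
  have h3 : ‖B.sgnSum (B.sgnOf z) G‖ ≤ 2 * t⁻¹ * (C * ‖z‖) := by
    push_cast at hE h1 h2 ⊢
    nlinarith [norm_nonneg (B.sgnSum (B.sgnOf z) G - (t⁻¹ : 𝕜) • B.proj G z)]
  calc t * ‖B.sgnSum (B.sgnOf z) G‖ ≤ t * (2 * t⁻¹ * (C * ‖z‖)) :=
        mul_le_mul_of_nonneg_left h3 (le_of_lt ht)
    _ = 2 * C * ‖z‖ := by field_simp

/-- Real nonneg multiplier lemma on unimodular base. -/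
lemma mult_real (B : BasisOf 𝕜 X) {C : ℝ} (hC : 0 ≤ C) (hQ : B.QuasiGreedyWith C)
    (G : Finset ℕ) (δ : ℕ → 𝕜) (hδ : ∀ n ∈ G, ‖δ n‖ = 1)
    (r : ℕ → ℝ) (hr : ∀ n ∈ G, 0 ≤ r n ∧ r n ≤ 1) :
    ‖∑ n ∈ G, ((r n : 𝕜) * δ n) • B.e n‖ ≤ (1 + C) * ‖B.sgnSum δ G‖ := by
  rcases G.eq_empty_or_nonempty with rfl | hne
  · simp; positivity
  set z := B.sgnSum δ G with hz
  have hco : ∀ n, B.coord n z = if n ∈ G then δ n else 0 := fun n => coord_sgnSum δ G n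
  have hgr : B.IsGreedySet z G := by
    intro a ha b hb
    rw [hco, hco, if_pos ha, if_neg hb, hδ a ha]
    simp
  set w : ℕ → ℝ := fun n => if n ∈ G then r n else 0 with hw
  have hsel : ∀ G' ⊆ G, G'.Nonempty → ∃ g ∈ G', (∀ a ∈ G', ‖B.coord g z‖ ≤ ‖B.coord a z‖) ∧
      ∀ a ∈ G', w a ≤ w g := by
    intro G' hsub hne'
    obtain ⟨g, hgG, hmax⟩ := G'.exists_max_image w hne'
    refine ⟨g, hgG, fun a ha => ?_, hmax⟩
    rw [hco, hco, if_pos (hsub ha), if_pos (hsub hgG), hδ a (hsub ha), hδ g (hsub hgG)]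
  have hwb : ∀ g ∈ G, (0:ℝ) ≤ w g ∧ w g ≤ 1 := by
    intro g hg; rw [hw]; simp only [if_pos hg]; exact (hr g hg)
  have hE := B.engine hC hQ z w 0 le_rfl G.card G rfl hgr hsel 1 zero_le_one hwb
  have hsum : (∑ g ∈ G, ((w g : 𝕜) * B.coord g z) • B.e g)
      = ∑ n ∈ G, ((r n : 𝕜) * δ n) • B.e n := by
    refine Finset.sum_congr rfl fun g hg => ?_
    rw [hco, if_pos hg, hw]; simp only [if_pos hg]
  have hproj : B.proj G z = z := by
    unfold proj
    rw [hz]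
    refine Finset.sum_congr rfl fun g hg => ?_
    rw [hco, if_pos hg]
  rw [hsum, hproj] at hE
  simp only [RCLike.ofReal_one, one_smul, sub_zero] at hE
  calc ‖∑ n ∈ G, ((r n : 𝕜) * δ n) • B.e n‖
      ≤ ‖(∑ n ∈ G, ((r n : 𝕜) * δ n) • B.e n) - z‖ + ‖z‖ := by
        have := norm_add_le ((∑ n ∈ G, ((r n : 𝕜) * δ n) • B.e n) - z) z
        simpa using this
    _ ≤ 1 * (C * ‖z‖) + ‖z‖ := by exact add_le_add hE le_rfl
    _ = (1 + C) * ‖z‖ := by ring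

lemma norm_I_le_one : ‖(RCLike.I : 𝕜)‖ ≤ 1 := by
  rcases @RCLike.I_mul_I_ax 𝕜 _ with h | h
  · rw [h]; simp
  · have h2 : ‖(RCLike.I : 𝕜)‖ * ‖(RCLike.I : 𝕜)‖ = 1 := by
      rw [← norm_mul, h]; simp
    nlinarith [norm_nonneg (RCLike.I : 𝕜)]

/-- Complex multiplier lemma. -/
lemma mult_complex (B : BasisOf 𝕜 X) {C : ℝ} (hC : 0 ≤ C) (hQ : B.QuasiGreedyWith C)
    (G : Finset ℕ) (δ : ℕ → 𝕜) (hδ : ∀ n ∈ G, ‖δ n‖ = 1)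
    (lam : ℕ → 𝕜) (hlam : ∀ n ∈ G, ‖lam n‖ ≤ 1) :
    ‖∑ n ∈ G, (lam n * δ n) • B.e n‖ ≤ 8 * (1 + C) * ‖B.sgnSum δ G‖ := by
  set a : ℕ → ℝ := fun n => max (RCLike.re (lam n)) 0 with ha
  set a' : ℕ → ℝ := fun n => max (-(RCLike.re (lam n))) 0 with ha'
  set b : ℕ → ℝ := fun n => max (RCLike.im (lam n)) 0 with hb
  set b' : ℕ → ℝ := fun n => max (-(RCLike.im (lam n))) 0 with hb'
  have hbnd : ∀ n ∈ G, (0 ≤ a n ∧ a n ≤ 1) ∧ (0 ≤ a' n ∧ a' n ≤ 1)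
      ∧ (0 ≤ b n ∧ b n ≤ 1) ∧ (0 ≤ b' n ∧ b' n ≤ 1) := by
    intro n hn
    have h1 : |RCLike.re (lam n)| ≤ 1 := le_trans (RCLike.abs_re_le_norm _) (hlam n hn)
    have h2 : |RCLike.im (lam n)| ≤ 1 := le_trans (RCLike.abs_im_le_norm _) (hlam n hn)
    rw [abs_le] at h1 h2
    refine ⟨⟨le_max_right _ _, ?_⟩, ⟨le_max_right _ _, ?_⟩,
      ⟨le_max_right _ _, ?_⟩, ⟨le_max_right _ _, ?_⟩⟩ <;>
      · apply max_le <;> linarith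
  have hdecomp : ∀ n, lam n = ((a n : 𝕜) - (a' n : 𝕜))
      + ((b n : 𝕜) - (b' n : 𝕜)) * RCLike.I := by
    intro n
    have h1 : a n - a' n = RCLike.re (lam n) := max_zero_sub_max_neg_zero_eq_self _
    have h2 : b n - b' n = RCLike.im (lam n) := max_zero_sub_max_neg_zero_eq_self _
    rw [← RCLike.ofReal_sub, ← RCLike.ofReal_sub, h1, h2, RCLike.re_add_im]
  have hsplit : (∑ n ∈ G, (lam n * δ n) • B.e n)
      = ((∑ n ∈ G, ((a n : 𝕜) * δ n) • B.e n) - ∑ n ∈ G, ((a' n : 𝕜) * δ n) • B.e n)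
        + (RCLike.I : 𝕜) • ((∑ n ∈ G, ((b n : 𝕜) * δ n) • B.e n)
          - ∑ n ∈ G, ((b' n : 𝕜) * δ n) • B.e n) := by
    rw [← Finset.sum_sub_distrib, ← Finset.sum_sub_distrib,
      Finset.smul_sum, ← Finset.sum_add_distrib]
    refine Finset.sum_congr rfl fun n hn => ?_
    rw [hdecomp n, smul_sub, smul_smul, smul_smul, ← sub_smul, ← sub_smul, ← add_smul]
    congr 1
    ring
  rw [hsplit]
  have hI : ‖(RCLike.I : 𝕜)‖ ≤ 1 := norm_I_le_one
  have e1 := B.mult_real hC hQ G δ hδ a (fun n hn => (hbnd n hn).1)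
  have e2 := B.mult_real hC hQ G δ hδ a' (fun n hn => (hbnd n hn).2.1)
  have e3 := B.mult_real hC hQ G δ hδ b (fun n hn => (hbnd n hn).2.2.1)
  have e4 := B.mult_real hC hQ G δ hδ b' (fun n hn => (hbnd n hn).2.2.2)
  have hIs : ‖(RCLike.I : 𝕜) • ((∑ n ∈ G, ((b n : 𝕜) * δ n) • B.e n)
      - ∑ n ∈ G, ((b' n : 𝕜) * δ n) • B.e n)‖
      ≤ ‖(∑ n ∈ G, ((b n : 𝕜) * δ n) • B.e n) - ∑ n ∈ G, ((b' n : 𝕜) * δ n) • B.e n‖ := by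
    rw [norm_smul]
    nlinarith [norm_nonneg ((∑ n ∈ G, ((b n : 𝕜) * δ n) • B.e n)
      - ∑ n ∈ G, ((b' n : 𝕜) * δ n) • B.e n)]
  have t1 := norm_sub_le (∑ n ∈ G, ((a n : 𝕜) * δ n) • B.e n)
    (∑ n ∈ G, ((a' n : 𝕜) * δ n) • B.e n)
  have t2 := norm_sub_le (∑ n ∈ G, ((b n : 𝕜) * δ n) • B.e n)
    (∑ n ∈ G, ((b' n : 𝕜) * δ n) • B.e n)
  have t0 := norm_add_le ((∑ n ∈ G, ((a n : 𝕜) * δ n) • B.e n)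
      - ∑ n ∈ G, ((a' n : 𝕜) * δ n) • B.e n)
    ((RCLike.I : 𝕜) • ((∑ n ∈ G, ((b n : 𝕜) * δ n) • B.e n)
      - ∑ n ∈ G, ((b' n : 𝕜) * δ n) • B.e n))
  have hz : (0:ℝ) ≤ ‖B.sgnSum δ G‖ := norm_nonneg _
  nlinarith

/-- Sign flipping on subsets. -/
lemma flip_sub (B : BasisOf 𝕜 X) {C : ℝ} (hC : 0 ≤ C) (hQ : B.QuasiGreedyWith C)
    (E G : Finset ℕ) (hEG : E ⊆ G) (ε δ : ℕ → 𝕜)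
    (hε : ∀ n ∈ E, ‖ε n‖ = 1) (hδ : ∀ n ∈ G, ‖δ n‖ = 1) :
    ‖B.sgnSum ε E‖ ≤ 8 * (1 + C) * ‖B.sgnSum δ G‖ := by
  set lam : ℕ → 𝕜 := fun n => if n ∈ E then ε n * (δ n)⁻¹ else 0 with hlamdef
  have hδne : ∀ n ∈ G, δ n ≠ 0 := fun n hn => by
    intro h; have := hδ n hn; rw [h] at this; simp at this
  have hlam : ∀ n ∈ G, ‖lam n‖ ≤ 1 := by
    intro n hn
    by_cases h : n ∈ E
    · have : lam n = ε n * (δ n)⁻¹ := by rw [hlamdef]; simp [h]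
      rw [this, norm_mul, norm_inv, hε n h, hδ n hn]; norm_num
    · have : lam n = 0 := by rw [hlamdef]; simp [h]
      rw [this]; simp
  have hsum : (∑ n ∈ G, (lam n * δ n) • B.e n) = B.sgnSum ε E := by
    unfold sgnSum
    rw [← Finset.sum_subset hEG (fun x _ hx => by
      have : lam x = 0 := by rw [hlamdef]; simp [hx]
      rw [this, zero_mul, zero_smul])]
    refine Finset.sum_congr rfl fun n hn => ?_
    have : lam n = ε n * (δ n)⁻¹ := by rw [hlamdef]; simp [hn]
    rw [this, mul_assoc, inv_mul_cancel₀ (hδne n (hEG hn)), mul_one]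
  rw [← hsum]
  exact B.mult_complex hC hQ G δ hδ lam hlam

/-- (i) implies quasi-greedy. -/
lemma spg_to_qg (B : BasisOf 𝕜 X) (seq : ℕ → ℕ) {lam : ℝ} (hlam : 1 < lam)
    (h : B.LamSPG seq lam) : B.QuasiGreedy := by
  obtain ⟨C, hC1, hS⟩ := h
  obtain ⟨c₁, c₂, hc₁, hlow, hhigh⟩ := B.norm_bounds
  refine ⟨1 + C + (⌈lam⌉₊ + 1) * c₂ ^ 2, ?_⟩
  intro x A hne hgr
  set N := A.card with hN
  have hN1 : 1 ≤ N := Finset.card_pos.2 hne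
  -- find minimal m with N ≤ ⌈lam * (m+1)⌉₊
  have hPex : ∃ p : ℕ, N ≤ ⌈lam * ((p:ℝ) + 1)⌉₊ := by
    refine ⟨N, ?_⟩
    have h1 : (N : ℝ) ≤ lam * ((N:ℝ) + 1) := by nlinarith [(by exact_mod_cast hN1 : (1:ℝ) ≤ (N:ℝ))]
    calc N = ⌈(N:ℝ)⌉₊ := by simp
      _ ≤ ⌈lam * ((N:ℝ) + 1)⌉₊ := Nat.ceil_le_ceil h1
  set p := Nat.find hPex with hp
  have hPp : N ≤ ⌈lam * ((p:ℝ) + 1)⌉₊ := Nat.find_spec hPex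
  set m := p + 1 with hm
  have hm1 : 1 ≤ m := by omega
  have hNm : N ≤ ⌈lam * (m:ℝ)⌉₊ := by
    have : ((m:ℝ)) = (p:ℝ) + 1 := by rw [hm]; push_cast; ring
    rw [this]; exact hPp
  -- gap bound
  have hgap : ⌈lam * (m:ℝ)⌉₊ - N ≤ ⌈lam⌉₊ + 1 := by
    rcases Nat.eq_zero_or_pos p with hp0 | hppos
    · have h0 : ⌈lam * ((0:ℝ) + 1)⌉₊ ≤ ⌈lam⌉₊ := by
        apply Nat.ceil_le_ceil; nlinarith
      have hmm : (m:ℝ) = (0:ℝ) + 1 := by rw [hm, hp0]; push_cast; ring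
      rw [hmm]
      omega
    · have hprev : ¬ N ≤ ⌈lam * ((p - 1 : ℕ) + 1 : ℝ)⌉₊ := Nat.find_min hPex (by omega)
      push_neg at hprev
      have hceil : ⌈lam * (m:ℝ)⌉₊ ≤ ⌈lam * (((p-1:ℕ):ℝ) + 1)⌉₊ + ⌈lam⌉₊ := by
        have heq : lam * (m:ℝ) = lam * (((p-1:ℕ):ℝ) + 1) + lam := by
          have : ((m:ℝ)) = ((p-1:ℕ):ℝ) + 1 + 1 := by
            rw [hm]; push_cast [Nat.cast_sub hppos]; ring
          rw [this]; ring
        rw [heq]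
        exact le_trans (Nat.ceil_add_le _ _) le_rfl
      omega
  set r := ⌈lam * (m:ℝ)⌉₊ - N with hr
  obtain ⟨A', hsub, hcard, hgr'⟩ := greedy_extend B x A hgr r
  have hcard' : A'.card = ⌈lam * (m:ℝ)⌉₊ := by rw [hcard]; omega
  have hspg := hS x m hm1 A' hcard' hgr' 0 (by omega)
  have hps0 : B.projSeq seq 0 x = 0 := by unfold projSeq; simp
  rw [hps0, sub_zero] at hspg
  -- proj A x = x - (x - proj A' x) - proj (A' \ A) x
  have hsplitproj : B.proj A' x = B.proj A x + B.proj (A' \ A) x := by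
    unfold proj
    rw [← Finset.sum_union Finset.disjoint_sdiff, Finset.union_sdiff_of_subset hsub]
  have hrest : ‖B.proj (A' \ A) x‖ ≤ (⌈lam⌉₊ + 1) * c₂ ^ 2 * ‖x‖ := by
    have hcardr : (A' \ A).card = r := by
      rw [Finset.card_sdiff_of_subset hsub, hcard]; omega
    calc ‖B.proj (A' \ A) x‖ ≤ ∑ n ∈ A' \ A, ‖B.coord n x • B.e n‖ := norm_sum_le _ _
      _ ≤ ∑ _n ∈ A' \ A, c₂ ^ 2 * ‖x‖ := by
          refine Finset.sum_le_sum fun n _ => ?_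
          rw [norm_smul]
          have h1 : ‖B.coord n x‖ ≤ c₂ * ‖x‖ := norm_coord_le x hhigh n
          have h2 : ‖B.e n‖ ≤ c₂ := (hhigh n).1
          have h3 : (0:ℝ) ≤ c₂ := le_trans (le_of_lt hc₁) (le_trans (hlow n).1 (hhigh n).1)
          calc ‖B.coord n x‖ * ‖B.e n‖ ≤ (c₂ * ‖x‖) * c₂ := by
                apply mul_le_mul h1 h2 (norm_nonneg _) (by positivity)
            _ = c₂ ^ 2 * ‖x‖ := by ring
      _ = r * (c₂ ^ 2 * ‖x‖) := by rw [Finset.sum_const, hcardr, nsmul_eq_mul]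
      _ ≤ (⌈lam⌉₊ + 1) * (c₂ ^ 2 * ‖x‖) := by
          have : (r:ℝ) ≤ ((⌈lam⌉₊:ℝ) + 1) := by exact_mod_cast hgap
          apply mul_le_mul_of_nonneg_right this (by positivity)
      _ = (⌈lam⌉₊ + 1) * c₂ ^ 2 * ‖x‖ := by ring
  have : B.proj A x = x - (x - B.proj A' x) - B.proj (A' \ A) x := by
    rw [hsplitproj]; abel
  rw [this]
  calc ‖x - (x - B.proj A' x) - B.proj (A' \ A) x‖
      ≤ ‖x - (x - B.proj A' x)‖ + ‖B.proj (A' \ A) x‖ := norm_sub_le _ _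
    _ ≤ (‖x‖ + ‖x - B.proj A' x‖) + (⌈lam⌉₊ + 1) * c₂ ^ 2 * ‖x‖ :=
        add_le_add (norm_sub_le _ _) hrest
    _ ≤ (‖x‖ + C * ‖x‖) + (⌈lam⌉₊ + 1) * c₂ ^ 2 * ‖x‖ := by
        gcongr
    _ = (1 + C + (⌈lam⌉₊ + 1) * c₂ ^ 2) * ‖x‖ := by ring

set_option maxHeartbeats 1000000 in
/-- (i) + quasi-greedy implies (λ,𝐧)-superconservative. -/
lemma spg_qg_supercons (B : BasisOf 𝕜 X) (seq : ℕ → ℕ) (hseq : StrictMono seq)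
    {lam : ℝ} (hlam : 1 < lam) (h : B.LamSPG seq lam)
    {CQ : ℝ} (hCQ0 : 0 ≤ CQ) (hQ : B.QuasiGreedyWith CQ) :
    B.LamSuperconservative seq lam := by
  obtain ⟨C, hC1, hS⟩ := h
  refine ⟨CQ * C + 1, by positivity, ?_⟩
  intro A D hT hlc ε δ hε hδ
  rcases A.eq_empty_or_nonempty with rfl | hAne
  · rw [sgnSum_empty]
    simp only [norm_zero]
    positivity
  have hiota : iotaMax seq A = sInf {i | seq i = A.max' hAne} + 1 := dif_pos hAne
  set k := iotaMax seq A with hkdef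
  have hk1 : 1 ≤ k := by omega
  have hsInfmem : seq (k - 1) = A.max' hAne := by
    have hnes : {i | seq i = A.max' hAne}.Nonempty := by
      obtain ⟨i, hi⟩ := hT.1 (Finset.mem_coe.2 (A.max'_mem hAne))
      exact ⟨i, hi⟩
    have := Nat.sInf_mem hnes
    have hk' : k - 1 = sInf {i | seq i = A.max' hAne} := by omega
    rw [hk']
    exact this
  set Abar := (Finset.range k).image seq with hAbar
  have hAsub : A ⊆ Abar := by
    intro a ha
    obtain ⟨i, hi⟩ := hT.1 (Finset.mem_coe.2 ha)
    have hle : a ≤ A.max' hAne := A.le_max' a ha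
    have : seq i ≤ seq (k-1) := by rw [hi, hsInfmem]; exact hle
    have hik : i < k := by
      have := (hseq.le_iff_le).1 this
      omega
    exact Finset.mem_image.2 ⟨i, Finset.mem_range.2 hik, hi⟩
  have hDAbar : ∀ d ∈ D, d ∉ Abar := by
    intro d hd hdbar
    obtain ⟨i, hik, hi⟩ := Finset.mem_image.1 hdbar
    rw [Finset.mem_range] at hik
    have hrange : d ∈ Set.range seq := ⟨i, hi⟩
    have hlt := hT.2.2 (A.max' hAne) (A.max'_mem hAne) d hd hrange
    have : d ≤ A.max' hAne := by
      rw [← hi, ← hsInfmem]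
      exact hseq.monotone (by omega)
    omega
  have hAD : ∀ a ∈ A, a ∉ D := by
    intro a ha had
    have : a ∈ Set.range seq := hT.1 (Finset.mem_coe.2 ha)
    exact lt_irrefl a (hT.2.2 a ha a had this)
  have hdisj : Disjoint Abar D := by
    rw [Finset.disjoint_right]
    exact hDAbar
  set η : ℕ → 𝕜 := fun n => if n ∈ D then δ n else if n ∈ A then ε n else 1 with hη
  have hηnorm : ∀ n, ‖η n‖ = 1 := by
    intro n
    rw [hη]
    by_cases h1 : n ∈ D
    · simp [h1, hδ n]
    · by_cases h2 : n ∈ A <;> simp [h1, h2, hε n]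
  set y := B.sgnSum η (Abar ∪ D) with hy
  have hcoy : ∀ n, B.coord n y = if n ∈ Abar ∪ D then η n else 0 :=
    fun n => coord_sgnSum η _ n
  have hAbarcard : Abar.card = k := by
    rw [hAbar, Finset.card_image_of_injective _ hseq.injective, Finset.card_range]
  have hAk : A.card ≤ k := by
    rw [← hAbarcard]; exact Finset.card_le_card hAsub
  have hlamk0 : (0:ℝ) ≤ (lam - 1) * (k:ℝ) := by
    apply mul_nonneg (by linarith) (Nat.cast_nonneg k)
  have hDbig : ⌈(lam - 1) * (k:ℝ)⌉₊ + A.card ≤ D.card := by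
    have h1 : ⌈(lam - 1) * (k:ℝ) + (A.card:ℝ)⌉₊ ≤ D.card := by
      rw [Nat.ceil_le]
      push_cast
      exact_mod_cast hlc
    rwa [Nat.ceil_add_natCast hlamk0] at h1
  set N := ⌈lam * (k:ℝ)⌉₊ with hN
  have hNk : N = ⌈(lam - 1) * (k:ℝ)⌉₊ + k := by
    rw [hN, show lam * (k:ℝ) = (lam - 1) * (k:ℝ) + (k:ℕ) by push_cast; ring,
      Nat.ceil_add_natCast hlamk0]
  set s₀ := ⌈(lam - 1) * (k:ℝ)⌉₊ + A.card with hs₀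
  obtain ⟨D₀, hD₀sub, hD₀card⟩ := Finset.exists_subset_card_eq (show s₀ ≤ D.card from hDbig)
  set S := (Abar \ A) ∪ D₀ with hSdef
  have hD₀Abar : Disjoint (Abar \ A) D₀ := hdisj.mono Finset.sdiff_subset hD₀sub
  have hScard : S.card = N := by
    rw [hSdef, Finset.card_union_of_disjoint hD₀Abar, Finset.card_sdiff_of_subset hAsub, hAbarcard,
      hD₀card, hs₀, hNk]
    omega
  have hSsub : S ⊆ Abar ∪ D := by
    rw [hSdef]
    exact Finset.union_subset_union Finset.sdiff_subset hD₀sub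
  have hSgr : B.IsGreedySet y S := by
    intro a ha b hb
    rw [hcoy, hcoy, if_pos (hSsub ha)]
    rw [hηnorm a]
    by_cases h1 : b ∈ Abar ∪ D
    · rw [if_pos h1, hηnorm b]
    · rw [if_neg h1]; simp
  have hspg := hS y k hk1 S (by rw [hScard]) hSgr k le_rfl
  have hproj_seq : B.projSeq seq k y = B.sgnSum η Abar := by
    unfold projSeq sgnSum
    rw [hAbar, Finset.sum_image (fun a _ b _ hab => hseq.injective hab)]
    refine Finset.sum_congr rfl fun i hi => ?_
    rw [hcoy, if_pos (Finset.mem_union_left _ (Finset.mem_image_of_mem seq hi))]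
  have hysplit : y = B.sgnSum η Abar + B.sgnSum η D := by
    rw [hy]
    unfold sgnSum
    rw [Finset.sum_union hdisj]
  have hrhs : y - B.projSeq seq k y = B.sgnSum δ D := by
    rw [hproj_seq, hysplit, add_sub_cancel_left]
    unfold sgnSum
    refine Finset.sum_congr rfl fun n hn => ?_
    rw [hη]
    simp [hn]
  have hprojS : B.proj S y = B.sgnSum η S := by
    unfold proj sgnSum
    refine Finset.sum_congr rfl fun n hn => ?_
    rw [hcoy, if_pos (hSsub hn)]
  have hsetid : (Abar ∪ D) \ S = A ∪ (D \ D₀) := by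
    ext n
    have h1 : n ∈ A → n ∈ Abar := fun h => hAsub h
    have h2 : n ∈ D → n ∉ Abar := fun h => hDAbar n h
    have h3 : n ∈ A → n ∉ D := fun h => hAD n h
    have h4 : n ∈ D₀ → n ∈ D := fun h => hD₀sub h
    simp only [hSdef, Finset.mem_sdiff, Finset.mem_union, Finset.mem_sdiff]
    tauto
  have hlhs : y - B.proj S y = B.sgnSum η (A ∪ (D \ D₀)) := by
    rw [hprojS, ← hsetid]
    rw [hy]
    unfold sgnSum
    rw [sub_eq_iff_eq_add]
    exact (Finset.sum_sdiff hSsub).symm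
  set v := B.sgnSum η (A ∪ (D \ D₀)) with hv
  have hcov : ∀ n, B.coord n v = if n ∈ A ∪ (D \ D₀) then η n else 0 :=
    fun n => coord_sgnSum η _ n
  have hgrA : B.IsGreedySet v A := by
    intro a ha b hb
    rw [hcov, hcov, if_pos (Finset.mem_union_left _ ha), hηnorm a]
    by_cases h1 : b ∈ A ∪ (D \ D₀)
    · rw [if_pos h1, hηnorm b]
    · rw [if_neg h1]; simp
  have hprojA : B.proj A v = B.sgnSum ε A := by
    unfold proj sgnSum
    refine Finset.sum_congr rfl fun n hn => ?_
    rw [hcov, if_pos (Finset.mem_union_left _ hn), hη]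
    have : n ∉ D := hAD n hn
    simp [this, hn]
  calc ‖B.sgnSum ε A‖ = ‖B.proj A v‖ := by rw [hprojA]
    _ ≤ CQ * ‖v‖ := hQ v A hAne hgrA
    _ = CQ * ‖y - B.proj S y‖ := by rw [hlhs]
    _ ≤ CQ * (C * ‖y - B.projSeq seq k y‖) :=
        mul_le_mul_of_nonneg_left hspg hCQ0
    _ = CQ * C * ‖B.sgnSum δ D‖ := by rw [hrhs]; ring
    _ ≤ (CQ * C + 1) * ‖B.sgnSum δ D‖ := by
        have := norm_nonneg (B.sgnSum δ D); nlinarith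

/-- quasi-greedy + (λ,𝐧)-superconservative implies (λ,𝐧)-PSLC. -/
lemma qg_supercons_pslc (B : BasisOf 𝕜 X) (seq : ℕ → ℕ) {lam : ℝ}
    {CQ : ℝ} (hCQ0 : 0 ≤ CQ) (hQ : B.QuasiGreedyWith CQ)
    (h : B.LamSuperconservative seq lam) : B.LamPSLC seq lam := by
  obtain ⟨Cs, hCs0, hsc⟩ := h
  refine ⟨1 + CQ + Cs * CQ + 1, by nlinarith, ?_⟩
  intro x hx A D hAsub hcard hlc hD0 horder ε δ hε hδ
  rcases D.eq_empty_or_nonempty with rfl | hDne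
  · have hA0 : A = ∅ := Finset.card_eq_zero.1 (Nat.le_zero.1 (by simpa using hcard))
    subst hA0
    rw [sgnSum_empty, sgnSum_empty]
    have h1 := norm_nonneg (x + (0:X))
    nlinarith [mul_nonneg (mul_nonneg hCs0.le hCQ0) h1, mul_nonneg hCQ0 h1]
  set v := x + B.sgnSum δ D with hv
  have hcov : ∀ n, B.coord n v = B.coord n x + (if n ∈ D then δ n else 0) := by
    intro n
    rw [hv, map_add, coord_sgnSum]
  have hcovD : ∀ d ∈ D, B.coord d v = δ d := by
    intro d hd
    rw [hcov, hD0 d hd, if_pos hd, zero_add]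
  have hgrD : B.IsGreedySet v D := by
    intro a ha b hb
    rw [hcovD a ha, hδ a]
    rw [hcov, if_neg hb, add_zero]
    exact hx b
  have hprojD : B.proj D v = B.sgnSum δ D := by
    unfold proj sgnSum
    exact Finset.sum_congr rfl fun d hd => by rw [hcovD d hd]
  have hnd : ‖B.sgnSum δ D‖ ≤ CQ * ‖v‖ := by
    rw [← hprojD]; exact hQ v D hDne hgrD
  have hnx : ‖x‖ ≤ (1 + CQ) * ‖v‖ := by
    have : x = v - B.sgnSum δ D := by rw [hv]; abel
    rw [this]
    calc ‖v - B.sgnSum δ D‖ ≤ ‖v‖ + ‖B.sgnSum δ D‖ := norm_sub_le _ _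
      _ ≤ ‖v‖ + CQ * ‖v‖ := by linarith
      _ = (1 + CQ) * ‖v‖ := by ring
  have hTP : TPair seq A D := by
    refine ⟨hAsub, hcard, fun a ha d hd hdr => ?_⟩
    exact horder a ha d (Or.inl hd) hdr
  have hA : ‖B.sgnSum ε A‖ ≤ Cs * ‖B.sgnSum δ D‖ := hsc A D hTP hlc ε δ hε hδ
  have hvn : (0:ℝ) ≤ ‖v‖ := norm_nonneg v
  calc ‖x + B.sgnSum ε A‖ ≤ ‖x‖ + ‖B.sgnSum ε A‖ := norm_add_le _ _
    _ ≤ (1 + CQ) * ‖v‖ + Cs * (CQ * ‖v‖) := by nlinarith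
    _ ≤ (1 + CQ + Cs * CQ + 1) * ‖x + B.sgnSum δ D‖ := by rw [← hv]; nlinarith

lemma pslc_supercons (B : BasisOf 𝕜 X) (seq : ℕ → ℕ) {lam : ℝ}
    (h : B.LamPSLC seq lam) : B.LamSuperconservative seq lam := by
  obtain ⟨C, hC1, hp⟩ := h
  refine ⟨C, by linarith, ?_⟩
  intro A D hT hlc ε δ hε hδ
  have h0 : ∀ n, ‖B.coord n (0:X)‖ ≤ 1 := by intro n; simp
  have := hp 0 h0 A D hT.1 hT.2.1 hlc (fun d _ => by simp)
    (fun a ha j hj hjr => by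
      rcases hj with hj | hj
      · exact hT.2.2 a ha j hj hjr
      · simp at hj) ε δ hε hδ
  simpa using this

lemma supercons_cons (B : BasisOf 𝕜 X) (seq : ℕ → ℕ) {lam : ℝ}
    (h : B.LamSuperconservative seq lam) : B.LamConservative seq lam := by
  obtain ⟨C, hC0, hsc⟩ := h
  refine ⟨C, hC0, ?_⟩
  intro A D hT hlc
  have := hsc A D hT hlc (fun _ => 1) (fun _ => 1) (fun n => by simp) (fun n => by simp)
  rwa [sgnSum_ones, sgnSum_ones] at this

/-- quasi-greedy + (λ,𝐧)-conservative implies (i). -/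
lemma qg_cons_spg (B : BasisOf 𝕜 X) (seq : ℕ → ℕ) (hseq : StrictMono seq)
    {lam : ℝ} (hlam : 1 < lam) {CQ : ℝ} (hCQ1 : 1 ≤ CQ) (hQ : B.QuasiGreedyWith CQ)
    (hc : B.LamConservative seq lam) : B.LamSPG seq lam := by
  obtain ⟨Cc, hCc0, hcons⟩ := hc
  have hCQ0 : (0:ℝ) ≤ CQ := by linarith
  set K : ℝ := 8 * (1 + CQ) with hK
  have hK0 : 0 ≤ K := by rw [hK]; linarith
  set Cstar : ℝ := 1 + CQ + 2 * CQ * Cc * K ^ 2 with hCstar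
  have hCstar1 : 1 ≤ Cstar := by
    rw [hCstar]
    nlinarith [sq_nonneg K, mul_pos (mul_pos (by linarith : (0:ℝ) < 2 * CQ) hCc0)
      (by nlinarith : (0:ℝ) < K ^ 2)]
  refine ⟨Cstar, hCstar1, ?_⟩
  intro x m hm1 A hcardA hgrA k hkm
  set B₀ := (Finset.range k).image seq with hB₀
  set z := x - B.projSeq seq k x with hz
  have hzproj : z = x - B.proj B₀ x := by rw [hz, projSeq_eq_proj seq hseq]
  have hcoz : ∀ n, B.coord n z = if n ∈ B₀ then 0 else B.coord n x := by
    intro n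
    rw [hzproj]
    exact coord_sub_proj B₀ x n
  have hAne : A.Nonempty := by
    rw [← Finset.card_pos, hcardA, Nat.ceil_pos]
    have : (0:ℝ) < (m:ℝ) := by exact_mod_cast hm1
    nlinarith
  have hmN : m < A.card := by
    rw [hcardA]
    rw [Nat.lt_ceil]
    have h1 : (1:ℝ) ≤ (m:ℝ) := by exact_mod_cast hm1
    nlinarith
  have hB₀card : B₀.card = k := by
    rw [hB₀, Finset.card_image_of_injective _ hseq.injective, Finset.card_range]
  have hABne : (A \ B₀).Nonempty := by
    rw [Finset.sdiff_nonempty]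
    intro hsub
    have := Finset.card_le_card hsub
    omega
  -- decomposition
  have hprojAB : B.proj (A \ B₀) z = B.proj (A \ B₀) x := by
    unfold proj
    refine Finset.sum_congr rfl fun n hn => ?_
    rw [hcoz, if_neg (Finset.mem_sdiff.1 hn).2]
  have hdecomp : x - B.proj A x = (z - B.proj (A \ B₀) z) + B.proj (B₀ \ A) x := by
    have h1 : B.proj A x + B.proj (B₀ \ A) x = B.proj B₀ x + B.proj (A \ B₀) x := by
      rw [← proj_union_sdiff, ← proj_union_sdiff, Finset.union_comm]
    have h2 : B.proj A x = B.proj B₀ x + B.proj (A \ B₀) x - B.proj (B₀ \ A) x := by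
      rw [← h1]; abel
    rw [hprojAB, hzproj, h2]; abel
  -- Term 1
  have hgrz : B.IsGreedySet z (A \ B₀) := by
    intro a ha b hb
    by_cases hbB : b ∈ B₀
    · rw [hcoz b, if_pos hbB]; simp
    · rw [hcoz b, if_neg hbB, hcoz a, if_neg (Finset.mem_sdiff.1 ha).2]
      have hbA : b ∉ A := fun hc => hb (Finset.mem_sdiff.2 ⟨hc, hbB⟩)
      exact hgrA a (Finset.mem_sdiff.1 ha).1 b hbA
  have ht1 : ‖z - B.proj (A \ B₀) z‖ ≤ (1 + CQ) * ‖z‖ := by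
    calc ‖z - B.proj (A \ B₀) z‖ ≤ ‖z‖ + ‖B.proj (A \ B₀) z‖ := norm_sub_le _ _
      _ ≤ ‖z‖ + CQ * ‖z‖ := by
          have := hQ z (A \ B₀) hABne hgrz; linarith
      _ = (1 + CQ) * ‖z‖ := by ring
  have hznn : (0:ℝ) ≤ ‖z‖ := norm_nonneg z
  -- Term 2
  set G := B₀ \ A with hG
  have hT2 : ‖B.proj G x‖ ≤ 2 * CQ * Cc * K ^ 2 * ‖z‖ := by
    rcases G.eq_empty_or_nonempty with hGe | hGne
    · rw [hGe, proj_empty, norm_zero]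
      positivity
    obtain ⟨a₀, ha₀A, ha₀min⟩ := A.exists_min_image (fun n => ‖B.coord n x‖) hAne
    set t := ‖B.coord a₀ x‖ with htdef
    have hble : ∀ b, b ∉ A → ‖B.coord b x‖ ≤ t := fun b hb => hgrA a₀ ha₀A b hb
    by_cases ht0 : t = 0
    · have : B.proj G x = 0 := by
        unfold proj
        refine Finset.sum_eq_zero fun n hn => ?_
        have : ‖B.coord n x‖ ≤ 0 := by
          rw [← ht0]; exact hble n (Finset.mem_sdiff.1 hn).2
        have : B.coord n x = 0 := norm_le_zero_iff.1 this
        rw [this, zero_smul]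
      rw [this, norm_zero]
      positivity
    have htpos : 0 < t := lt_of_le_of_ne (norm_nonneg _) (Ne.symm ht0)
    have hcoordAB : ∀ g ∈ A \ B₀, t ≤ ‖B.coord g z‖ := by
      intro g hg
      rw [hcoz, if_neg (Finset.mem_sdiff.1 hg).2]
      exact ha₀min g (Finset.mem_sdiff.1 hg).1
    -- step 1 : ‖proj G x‖ ≤ K * t * ‖ones G‖
    have hstep1 : ‖B.proj G x‖ ≤ K * (t * ‖B.ones G‖) := by
      set lamG : ℕ → 𝕜 := fun n => ((t⁻¹ : ℝ) : 𝕜) * B.coord n x with hlamG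
      have hlamGle : ∀ n ∈ G, ‖lamG n‖ ≤ 1 := by
        intro n hn
        rw [hlamG]
        simp only []
        rw [norm_mul, RCLike.norm_ofReal, abs_of_nonneg (by positivity)]
        rw [inv_mul_le_iff₀ htpos, mul_one]
        exact hble n (Finset.mem_sdiff.1 hn).2
      have hmc := B.mult_complex hCQ0 hQ G (fun _ => (1:𝕜)) (fun n _ => by simp)
        lamG hlamGle
      rw [sgnSum_ones] at hmc
      have hsum : (∑ n ∈ G, (lamG n * 1) • B.e n) = ((t⁻¹ : ℝ) : 𝕜) • B.proj G x := by
        unfold proj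
        rw [Finset.smul_sum]
        refine Finset.sum_congr rfl fun n hn => ?_
        rw [hlamG]
        simp only []
        rw [mul_one, mul_smul]
      rw [hsum, norm_smul, RCLike.norm_ofReal, abs_of_nonneg (by positivity)] at hmc
      rw [← hK] at hmc
      calc ‖B.proj G x‖ = t * (t⁻¹ * ‖B.proj G x‖) := by field_simp
        _ ≤ t * (K * ‖B.ones G‖) := by
            apply mul_le_mul_of_nonneg_left hmc (le_of_lt htpos)
        _ = K * (t * ‖B.ones G‖) := by ring
    -- step 2 : conservative
    have hGsub : (↑G : Set ℕ) ⊆ Set.range seq := by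
      intro g hg
      obtain ⟨i, _, hi⟩ := Finset.mem_image.1 (Finset.mem_sdiff.1 (Finset.mem_coe.1 hg)).1
      exact ⟨i, hi⟩
    have hiotaG : iotaMax seq G ≤ k := by
      have hiota' : iotaMax seq G = sInf {i | seq i = G.max' hGne} + 1 := dif_pos hGne
      obtain ⟨j, hjk, hj⟩ := Finset.mem_image.1 (Finset.mem_sdiff.1 (G.max'_mem hGne)).1
      rw [Finset.mem_range] at hjk
      have : sInf {i | seq i = G.max' hGne} ≤ j := Nat.sInf_le hj
      omega
    set sE := ⌈(lam - 1) * (iotaMax seq G : ℝ)⌉₊ + G.card with hsE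
    have hlamm0 : (0:ℝ) ≤ (lam - 1) * (m:ℝ) := by
      apply mul_nonneg (by linarith) (Nat.cast_nonneg m)
    have hNm : A.card = ⌈(lam - 1) * (m:ℝ)⌉₊ + m := by
      rw [hcardA, show lam * (m:ℝ) = (lam - 1) * (m:ℝ) + (m:ℕ) by push_cast; ring,
        Nat.ceil_add_natCast hlamm0]
    have hceilmono : ⌈(lam - 1) * (iotaMax seq G : ℝ)⌉₊ ≤ ⌈(lam - 1) * (m:ℝ)⌉₊ := by
      apply Nat.ceil_le_ceil
      apply mul_le_mul_of_nonneg_left _ (by linarith : (0:ℝ) ≤ lam - 1)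
      exact_mod_cast le_trans hiotaG hkm
    have hcard1 : G.card + (B₀ ∩ A).card = k := by
      rw [hG]
      have := Finset.card_sdiff_add_card_inter B₀ A
      omega
    have hcard2 : (A \ B₀).card + (A ∩ B₀).card = A.card :=
      Finset.card_sdiff_add_card_inter A B₀
    have hinter : (A ∩ B₀).card = (B₀ ∩ A).card := by rw [Finset.inter_comm]
    have hsEle : sE ≤ (A \ B₀).card := by
      rw [hsE]
      omega
    obtain ⟨E, hEsub, hEcard⟩ := Finset.exists_subset_card_eq hsEle
    have hTPGE : TPair seq G E := by
      refine ⟨hGsub, by rw [hEcard, hsE]; omega, ?_⟩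
      intro b hb d hd hdr
      obtain ⟨j, hjk, hj⟩ := Finset.mem_image.1 (Finset.mem_sdiff.1 hb).1
      rw [Finset.mem_range] at hjk
      obtain ⟨i, hi⟩ := hdr
      have hdB₀ : d ∉ B₀ := (Finset.mem_sdiff.1 (hEsub hd)).2
      have hik : k ≤ i := by
        by_contra hik
        push_neg at hik
        exact hdB₀ (by rw [hB₀]; exact Finset.mem_image.2 ⟨i, Finset.mem_range.2 hik, hi⟩)
      rw [← hj, ← hi]
      exact hseq (by omega)
    have hlcGE : (lam - 1) * (iotaMax seq G : ℝ) + G.card ≤ E.card := by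
      rw [hEcard, hsE]
      push_cast
      have := Nat.le_ceil ((lam - 1) * (iotaMax seq G : ℝ))
      linarith
    have hstep2 : ‖B.ones G‖ ≤ Cc * ‖B.ones E‖ := hcons G E hTPGE hlcGE
    -- step 3 : flip
    have hstep3 : ‖B.ones E‖ ≤ K * ‖B.sgnSum (B.sgnOf z) (A \ B₀)‖ := by
      have := B.flip_sub hCQ0 hQ E (A \ B₀) hEsub (fun _ => (1:𝕜)) (B.sgnOf z)
        (fun n _ => by simp) (fun n _ => B.norm_sgnOf z n)
      rwa [sgnSum_ones, ← hK] at this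
    -- step 4 : Abel
    have hstep4 : t * ‖B.sgnSum (B.sgnOf z) (A \ B₀)‖ ≤ 2 * CQ * ‖z‖ :=
      B.abel_sgn hCQ0 hQ z (A \ B₀) hgrz hABne htpos hcoordAB
    -- combine
    have hones_nn : (0:ℝ) ≤ ‖B.ones E‖ := norm_nonneg _
    have hsgn_nn : (0:ℝ) ≤ ‖B.sgnSum (B.sgnOf z) (A \ B₀)‖ := norm_nonneg _
    calc ‖B.proj G x‖ ≤ K * (t * ‖B.ones G‖) := hstep1
      _ ≤ K * (t * (Cc * ‖B.ones E‖)) := by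
          apply mul_le_mul_of_nonneg_left _ hK0
          exact mul_le_mul_of_nonneg_left hstep2 (le_of_lt htpos)
      _ ≤ K * (t * (Cc * (K * ‖B.sgnSum (B.sgnOf z) (A \ B₀)‖))) := by
          apply mul_le_mul_of_nonneg_left _ hK0
          apply mul_le_mul_of_nonneg_left _ (le_of_lt htpos)
          exact mul_le_mul_of_nonneg_left hstep3 (le_of_lt hCc0)
      _ = K ^ 2 * Cc * (t * ‖B.sgnSum (B.sgnOf z) (A \ B₀)‖) := by ring
      _ ≤ K ^ 2 * Cc * (2 * CQ * ‖z‖) := by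
          apply mul_le_mul_of_nonneg_left hstep4
          positivity
      _ = 2 * CQ * Cc * K ^ 2 * ‖z‖ := by ring
  rw [hdecomp]
  calc ‖(z - B.proj (A \ B₀) z) + B.proj (B₀ \ A) x‖
      ≤ ‖z - B.proj (A \ B₀) z‖ + ‖B.proj (B₀ \ A) x‖ := norm_add_le _ _
    _ ≤ (1 + CQ) * ‖z‖ + 2 * CQ * Cc * K ^ 2 * ‖z‖ := add_le_add ht1 hT2
    _ = Cstar * ‖z‖ := by rw [hCstar]; ring

theorem statement18' (B : BasisOf 𝕜 X) (seq : ℕ → ℕ) (hseq : StrictMono seq)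
    (lam : ℝ) (hlam : 1 < lam) :
    (B.LamSPG seq lam ↔ B.QuasiGreedy ∧ B.LamPSLC seq lam) ∧
    (B.LamSPG seq lam ↔ B.QuasiGreedy ∧ B.LamSuperconservative seq lam) ∧
    (B.LamSPG seq lam ↔ B.QuasiGreedy ∧ B.LamConservative seq lam) := by
  have fwd : B.LamSPG seq lam → B.QuasiGreedy ∧ B.LamSuperconservative seq lam := by
    intro h
    obtain ⟨CQ', hQ'⟩ := B.spg_to_qg seq hlam h
    have hQ : B.QuasiGreedyWith (max CQ' 0) := fun x A hne hgr =>
      le_trans (hQ' x A hne hgr) (mul_le_mul_of_nonneg_right (le_max_left _ _) (norm_nonneg x))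
    exact ⟨⟨CQ', hQ'⟩, B.spg_qg_supercons seq hseq hlam h (le_max_right _ _) hQ⟩
  have back : B.QuasiGreedy → B.LamConservative seq lam → B.LamSPG seq lam := by
    rintro ⟨CQ', hQ'⟩ hc
    have hQ : B.QuasiGreedyWith (max CQ' 1) := fun x A hne hgr =>
      le_trans (hQ' x A hne hgr) (mul_le_mul_of_nonneg_right (le_max_left _ _) (norm_nonneg x))
    exact B.qg_cons_spg seq hseq hlam (le_max_right _ _) hQ hc
  refine ⟨⟨?_, ?_⟩, ⟨?_, ?_⟩, ⟨?_, ?_⟩⟩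
  · intro h
    obtain ⟨hqg, hsc⟩ := fwd h
    refine ⟨hqg, ?_⟩
    obtain ⟨CQ', hQ'⟩ := hqg
    have hQ : B.QuasiGreedyWith (max CQ' 0) := fun x A hne hgr =>
      le_trans (hQ' x A hne hgr) (mul_le_mul_of_nonneg_right (le_max_left _ _) (norm_nonneg x))
    exact B.qg_supercons_pslc seq (le_max_right _ _) hQ hsc
  · rintro ⟨hqg, hpslc⟩
    exact back hqg (B.supercons_cons seq (B.pslc_supercons seq hpslc))
  · exact fwd
  · rintro ⟨hqg, hsc⟩
    exact back hqg (B.supercons_cons seq hsc)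
  · intro h
    obtain ⟨hqg, hsc⟩ := fwd h
    exact ⟨hqg, B.supercons_cons seq hsc⟩
  · rintro ⟨hqg, hc⟩
    exact back hqg hc

end Aux

end BasisOf

/-- For `λ > 1`, being (λ, 𝐧, strong partially greedy) is equivalent to
being quasi-greedy together with any one of: (λ, 𝐧, PSLC), (λ, 𝐧, superconservative),
(λ, 𝐧, conservative). -/
theorem statement18 {𝕜 X : Type*} [RCLike 𝕜] [NormedAddCommGroup X] [NormedSpace 𝕜 X]
    [CompleteSpace X] (B : BasisOf 𝕜 X) (seq : ℕ → ℕ) (hseq : StrictMono seq)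
    (lam : ℝ) (hlam : 1 < lam) :
    (B.LamSPG seq lam ↔ B.QuasiGreedy ∧ B.LamPSLC seq lam) ∧
    (B.LamSPG seq lam ↔ B.QuasiGreedy ∧ B.LamSuperconservative seq lam) ∧
    (B.LamSPG seq lam ↔ B.QuasiGreedy ∧ B.LamConservative seq lam) := by
  exact B.statement18' seq hseq lam hlam
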